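/- Stein–Weiss power-weight condition: let 0 < α < n, 1 < p ≤ q < ∞, and real numbers a, b with −n/q < a ≤ b < n/p' (where 1/p + 1/p' = 1) satisfying 1/p − 1/q = α/n + (a−b)/n. Then sup over all cubes Q ⊂ ℝⁿ of |Q|^{α/n + 1/q − 1/p} · ((1/|Q|)∫_Q |x|^{aq} dx)^{1/q} · ((1/|Q|)∫_Q |x|^{−bp'} dx)^{1/p'} is finite. -/

import Mathlib

open MeasureTheory

section SteinWeissAux

open Metric Set
open scoped ENNReal

noncomputable section

abbrev Eucl (n : ℕ) := EuclideanSpace ℝ (Fin n)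

variable {n : ℕ}

lemma abs_set_eq (m r : ℝ) : {t : ℝ | |t - m| ≤ r} = Icc (m - r) (m + r) := by
  ext t; simp only [Set.mem_setOf_eq, Set.mem_Icc, abs_le]
  constructor <;> (intro h; constructor <;> linarith [h.1, h.2])

lemma cube_measurable (c : Eucl n) (ℓ : ℝ) :
    MeasurableSet {x : Eucl n | ∀ i, |x i - c i| ≤ ℓ / 2} := by
  have h : {x : Eucl n | ∀ i, |x i - c i| ≤ ℓ / 2}
      = ⋂ i, (fun x : Eucl n => x i) ⁻¹' {t | |t - c i| ≤ ℓ / 2} := by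
    ext x; simp [Set.mem_iInter]
  rw [h]
  refine MeasurableSet.iInter fun i => ?_
  have hm : Measurable (fun x : Eucl n => x i) :=
    (measurable_pi_apply i).comp (MeasurableEquiv.toLp 2 (Fin n → ℝ)).symm.measurable
  rw [abs_set_eq]; exact hm measurableSet_Icc

lemma cube_volume (c : Eucl n) {ℓ : ℝ} (hℓ : 0 < ℓ) :
    volume {x : Eucl n | ∀ i, |x i - c i| ≤ ℓ / 2} = ENNReal.ofReal (ℓ ^ n) := by
  have h : {x : Eucl n | ∀ i, |x i - c i| ≤ ℓ / 2}
      = (MeasurableEquiv.toLp 2 (Fin n → ℝ)).symm ⁻¹'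
        (Set.univ.pi fun i => Icc (c i - ℓ / 2) (c i + ℓ / 2)) := by
    ext x
    simp only [Set.mem_setOf_eq, Set.mem_preimage, Set.mem_pi, Set.mem_univ, forall_true_left,
      Set.mem_Icc, MeasurableEquiv.coe_toLp_symm]
    constructor
    · intro hx i; have := hx i; rw [abs_le] at this
      constructor <;> [linarith [this.1]; linarith [this.2]]
    · intro hx i; rw [abs_le]
      have := hx i
      constructor <;> [linarith [this.1]; linarith [this.2]]
  rw [h, (EuclideanSpace.volume_preserving_symm_measurableEquiv_toLp (Fin n)).measure_preimage
    (MeasurableSet.univ_pi fun i => measurableSet_Icc).nullMeasurableSet,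
    volume_pi_pi]
  simp only [Real.volume_Icc]
  have he : ∀ i : Fin n, c i + ℓ / 2 - (c i - ℓ / 2) = ℓ := fun i => by ring
  simp only [he]
  rw [Finset.prod_const, ← ENNReal.ofReal_pow hℓ.le]
  simp

lemma cube_norm_bound {n : ℕ} (c : Eucl n) {ℓ : ℝ} (hℓ : 0 ≤ ℓ) (x : Eucl n)
    (hx : ∀ i, |x i - c i| ≤ ℓ / 2) : ‖x - c‖ ≤ Real.sqrt n * (ℓ / 2) := by
  rw [EuclideanSpace.norm_eq]
  have h1 : ∀ i, ‖(x - c) i‖ ^ 2 ≤ (ℓ / 2) ^ 2 := by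
    intro i
    have : (x - c) i = x i - c i := by simp
    rw [this, Real.norm_eq_abs, sq_abs]
    exact sq_le_sq' (by linarith [(abs_le.mp (hx i)).1]) (abs_le.mp (hx i)).2
  calc Real.sqrt (∑ i, ‖(x - c) i‖ ^ 2) ≤ Real.sqrt (∑ _i : Fin n, (ℓ / 2) ^ 2) :=
        Real.sqrt_le_sqrt (Finset.sum_le_sum fun i _ => h1 i)
    _ = Real.sqrt n * (ℓ / 2) := by
        rw [Finset.sum_const, Finset.card_univ, Fintype.card_fin, nsmul_eq_mul,
          Real.sqrt_mul (by positivity), Real.sqrt_sq (by linarith)]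

lemma lintegral_rpow_closedBall {n : ℕ} (hn : 1 ≤ n) {s : ℝ} (hs : -(n : ℝ) < s) (hs0 : s < 0) :
    ∃ K : ℝ≥0∞, K ≠ ⊤ ∧ ∀ R : ℝ, 0 < R →
      ∫⁻ x in closedBall (0 : Eucl n) R, ENNReal.ofReal (‖x‖ ^ s)
        ≤ K * ENNReal.ofReal (R ^ ((n : ℝ) + s)) := by
  have hns : (0 : ℝ) < (n : ℝ) + s := by linarith
  set ρ : ℝ := (2 : ℝ) ^ (-((n : ℝ) + s)) with hρdef
  have hρ0 : 0 < ρ := Real.rpow_pos_of_pos two_pos _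
  have hρ1 : ρ < 1 := Real.rpow_lt_one_of_one_lt_of_neg one_lt_two (by linarith)
  set V : ℝ≥0∞ := volume (ball (0 : Eucl n) 1) with hVdef
  have hV : V ≠ ⊤ := measure_ball_lt_top.ne
  refine ⟨ENNReal.ofReal (2 ^ (-s)) * V * (1 - ENNReal.ofReal ρ)⁻¹, ?_, ?_⟩
  · refine ENNReal.mul_ne_top (ENNReal.mul_ne_top ENNReal.ofReal_ne_top hV) ?_
    rw [ENNReal.inv_ne_top]
    simp only [ne_eq, tsub_eq_zero_iff_le, not_le]
    exact ENNReal.ofReal_lt_one.mpr hρ1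
  intro R hR
  set A : ℕ → Set (Eucl n) := fun k =>
    {x : Eucl n | R / 2 ^ (k + 1) < ‖x‖} ∩ closedBall 0 (R / 2 ^ k) with hA
  have cover : closedBall (0 : Eucl n) R ⊆ {(0 : Eucl n)} ∪ ⋃ k, A k := by
    intro x hx
    rcases eq_or_ne x 0 with h0 | h0
    · exact Or.inl (by simp [h0])
    right
    have hx0 : 0 < ‖x‖ := norm_pos_iff.mpr h0
    have h1 : (1 : ℝ) ≤ R / ‖x‖ := (one_le_div hx0).mpr (mem_closedBall_zero_iff.mp hx)
    obtain ⟨k, hk1, hk2⟩ := exists_nat_pow_near h1 one_lt_two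
    refine mem_iUnion.2 ⟨k, ⟨?_, ?_⟩⟩
    · have : R < ‖x‖ * 2 ^ (k + 1) := by
        rw [div_lt_iff₀ hx0] at hk2; linarith [hk2]
      rw [Set.mem_setOf_eq, div_lt_iff₀ (by positivity)]
      linarith
    · rw [mem_closedBall_zero_iff, le_div_iff₀ (by positivity)]
      rw [le_div_iff₀ hx0] at hk1; linarith
  have hAbound : ∀ k : ℕ, ∫⁻ x in A k, ENNReal.ofReal (‖x‖ ^ s)
      ≤ ENNReal.ofReal ((R / 2 ^ (k + 1)) ^ s) * volume (closedBall (0 : Eucl n) (R / 2 ^ k)) := by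
    intro k
    have hmeas : MeasurableSet (A k) :=
      ((measurable_norm.comp measurable_id) measurableSet_Ioi).inter measurableSet_closedBall
    calc ∫⁻ x in A k, ENNReal.ofReal (‖x‖ ^ s)
        ≤ ∫⁻ _x in A k, ENNReal.ofReal ((R / 2 ^ (k + 1)) ^ s) := by
          refine setLIntegral_mono' hmeas fun x hx => ?_
          refine ENNReal.ofReal_le_ofReal ?_
          exact Real.rpow_le_rpow_of_nonpos (by positivity) (le_of_lt hx.1) hs0.le
      _ = ENNReal.ofReal ((R / 2 ^ (k + 1)) ^ s) * volume (A k) := setLIntegral_const _ _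
      _ ≤ _ := by
          exact mul_le_mul_right (measure_mono Set.inter_subset_right) _
  have hball : ∀ k : ℕ, volume (closedBall (0 : Eucl n) (R / 2 ^ k))
      = ENNReal.ofReal ((R / 2 ^ k) ^ n) * V := by
    intro k
    rw [hVdef]
    have := Measure.addHaar_closedBall (volume : Measure (Eucl n)) 0
      (r := R / 2 ^ k) (by positivity)
    rwa [finrank_euclideanSpace_fin] at this
  have hterm : ∀ k : ℕ, ENNReal.ofReal ((R / 2 ^ (k + 1)) ^ s) * ENNReal.ofReal ((R / 2 ^ k) ^ n)
      = ENNReal.ofReal (R ^ ((n : ℝ) + s)) * ENNReal.ofReal (2 ^ (-s)) * ENNReal.ofReal ρ ^ k := by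
    intro k
    rw [← ENNReal.ofReal_mul (by positivity), ← ENNReal.ofReal_pow hρ0.le,
      ← ENNReal.ofReal_mul (by positivity), ← ENNReal.ofReal_mul (by positivity)]
    congr 1
    have e1 : (R / 2 ^ (k + 1)) ^ s = R ^ s * (2:ℝ) ^ (-((k:ℝ) + 1) * s) := by
      rw [Real.div_rpow hR.le (by positivity), ← Real.rpow_natCast (2:ℝ) (k+1),
        ← Real.rpow_mul (by norm_num), div_eq_mul_inv, ← Real.rpow_neg (by norm_num)]
      push_cast
      ring_nf
    have e2 : ((R / 2 ^ k) ^ n : ℝ) = R ^ (n : ℝ) * (2:ℝ) ^ (-(k:ℝ) * (n:ℝ)) := by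
      rw [← Real.rpow_natCast (R / 2 ^ k) n, Real.div_rpow hR.le (by positivity),
        ← Real.rpow_natCast (2:ℝ) k, ← Real.rpow_mul (by norm_num),
        div_eq_mul_inv, ← Real.rpow_neg (by norm_num)]
      ring_nf
    have e3 : (ρ ^ k : ℝ) = (2:ℝ) ^ (-((n:ℝ) + s) * (k:ℝ)) := by
      rw [hρdef, ← Real.rpow_natCast ((2:ℝ) ^ (-((n:ℝ)+s))) k, ← Real.rpow_mul (by norm_num)]
    have hA2 : (2:ℝ) ^ (-((k:ℝ) + 1) * s) * 2 ^ (-(k:ℝ) * (n:ℝ))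
        = 2 ^ (-s) * 2 ^ (-((n:ℝ) + s) * (k:ℝ)) := by
      rw [← Real.rpow_add two_pos, ← Real.rpow_add two_pos]
      congr 1
      ring
    rw [e1, e2, e3, Real.rpow_add hR (n:ℝ) s, mul_mul_mul_comm, hA2]
    ring
  calc ∫⁻ x in closedBall (0 : Eucl n) R, ENNReal.ofReal (‖x‖ ^ s)
      ≤ ∫⁻ x in ({(0 : Eucl n)} ∪ ⋃ k, A k), ENNReal.ofReal (‖x‖ ^ s) :=
        lintegral_mono_set cover
    _ ≤ (∫⁻ x in ({(0 : Eucl n)} : Set (Eucl n)), ENNReal.ofReal (‖x‖ ^ s))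
        + ∫⁻ x in (⋃ k, A k), ENNReal.ofReal (‖x‖ ^ s) := lintegral_union_le _ _ _
    _ ≤ 0 + ∑' k, ∫⁻ x in A k, ENNReal.ofReal (‖x‖ ^ s) := by
        refine add_le_add ?_ (lintegral_iUnion_le _ _)
        have hz : volume ({(0 : Eucl n)} : Set (Eucl n)) = 0 := by
          have h0 := Measure.addHaar_closedBall (volume : Measure (Eucl n)) (0 : Eucl n)
            (r := 0) le_rfl
          rw [finrank_euclideanSpace_fin, zero_pow (by omega : n ≠ 0)] at h0
          have he : ({(0 : Eucl n)} : Set (Eucl n)) = closedBall (0 : Eucl n) 0 :=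
            Metric.closedBall_zero.symm
          rw [he, h0]
          simp
        rw [setLIntegral_measure_zero _ _ hz]
    _ ≤ ∑' k, ENNReal.ofReal (R ^ ((n : ℝ) + s)) * ENNReal.ofReal (2 ^ (-s))
          * ENNReal.ofReal ρ ^ k * V := by
        rw [zero_add]
        refine ENNReal.tsum_le_tsum fun k => ?_
        calc ∫⁻ x in A k, ENNReal.ofReal (‖x‖ ^ s)
            ≤ ENNReal.ofReal ((R / 2 ^ (k + 1)) ^ s)
              * volume (closedBall (0 : Eucl n) (R / 2 ^ k)) := hAbound k
          _ = _ := by rw [hball k, ← mul_assoc, hterm k]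
    _ = (ENNReal.ofReal (R ^ ((n : ℝ) + s)) * ENNReal.ofReal (2 ^ (-s)) * V)
        * ∑' k, ENNReal.ofReal ρ ^ k := by
        rw [← ENNReal.tsum_mul_left]
        exact tsum_congr fun k => by ring
    _ = ENNReal.ofReal (2 ^ (-s)) * V * (1 - ENNReal.ofReal ρ)⁻¹
        * ENNReal.ofReal (R ^ ((n : ℝ) + s)) := by
        rw [ENNReal.tsum_geometric]
        ring

lemma avg_le_of_lintegral_le {n : ℕ} (c : Eucl n) {ℓ : ℝ} (hℓ : 0 < ℓ) {s B : ℝ} (hB : 0 ≤ B)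
    (h : ∫⁻ x in {x : Eucl n | ∀ i, |x i - c i| ≤ ℓ / 2}, ENNReal.ofReal (‖x‖ ^ s)
      ≤ ENNReal.ofReal (ℓ ^ n * B)) :
    ⨍ x in {x : Eucl n | ∀ i, |x i - c i| ≤ ℓ / 2}, ‖x‖ ^ s ∂volume ≤ B := by
  rw [setAverage_eq, measureReal_def, cube_volume c hℓ, ENNReal.toReal_ofReal (by positivity), smul_eq_mul]
  have hmeas : AEStronglyMeasurable (fun x : Eucl n => ‖x‖ ^ s)
      (volume.restrict {x : Eucl n | ∀ i, |x i - c i| ≤ ℓ / 2}) := by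
    apply Measurable.aestronglyMeasurable
    fun_prop
  rw [MeasureTheory.integral_eq_lintegral_of_nonneg_ae
    (Filter.Eventually.of_forall fun x => Real.rpow_nonneg (norm_nonneg x) s) hmeas]
  have hX : (∫⁻ x in {x : Eucl n | ∀ i, |x i - c i| ≤ ℓ / 2},
      ENNReal.ofReal (‖x‖ ^ s)).toReal ≤ ℓ ^ n * B :=
    ENNReal.toReal_le_of_le_ofReal (by positivity) h
  calc (ℓ ^ n)⁻¹ * (∫⁻ x in {x : Eucl n | ∀ i, |x i - c i| ≤ ℓ / 2},
        ENNReal.ofReal (‖x‖ ^ s)).toReal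
      ≤ (ℓ ^ n)⁻¹ * (ℓ ^ n * B) := mul_le_mul_of_nonneg_left hX (by positivity)
    _ = B := by field_simp

lemma avg_rpow_bound {n : ℕ} (hn : 1 ≤ n) {s : ℝ} (hs : -(n : ℝ) < s) :
    ∃ K : ℝ, 0 < K ∧ ∀ (c : Eucl n) (ℓ : ℝ), 0 < ℓ →
      ⨍ x in {x : Eucl n | ∀ i, |x i - c i| ≤ ℓ / 2}, ‖x‖ ^ s ∂volume
        ≤ K * (max ‖c‖ (Real.sqrt n * ℓ)) ^ s := by
  have hsq1 : 1 ≤ Real.sqrt n := by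
    rw [show (1 : ℝ) = Real.sqrt 1 by simp]
    exact Real.sqrt_le_sqrt (by exact_mod_cast hn)
  have hsq0 : 0 < Real.sqrt n := by linarith
  rcases le_or_gt 0 s with hs0 | hs0
  · refine ⟨2 ^ s, Real.rpow_pos_of_pos two_pos s, fun c ℓ hℓ => ?_⟩
    set M := max ‖c‖ (Real.sqrt n * ℓ) with hM
    have hM0 : 0 < M := lt_of_lt_of_le (by positivity) (le_max_right _ _)
    apply avg_le_of_lintegral_le c hℓ (by positivity)
    have hpt : ∀ x ∈ {x : Eucl n | ∀ i, |x i - c i| ≤ ℓ / 2}, ‖x‖ ^ s ≤ (2 * M) ^ s := by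
      intro x hx
      have h1 : ‖x - c‖ ≤ Real.sqrt n * (ℓ / 2) := cube_norm_bound c hℓ.le x hx
      have h2 : ‖x‖ - ‖c‖ ≤ ‖x - c‖ := norm_sub_norm_le x c
      have h3 : ‖c‖ ≤ M := le_max_left _ _
      have h4 : Real.sqrt n * ℓ ≤ M := le_max_right _ _
      have h5 : ‖x‖ ≤ 2 * M := by linarith
      exact Real.rpow_le_rpow (norm_nonneg x) h5 hs0
    calc ∫⁻ x in {x : Eucl n | ∀ i, |x i - c i| ≤ ℓ / 2}, ENNReal.ofReal (‖x‖ ^ s)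
        ≤ ∫⁻ _x in {x : Eucl n | ∀ i, |x i - c i| ≤ ℓ / 2}, ENNReal.ofReal ((2 * M) ^ s) :=
          setLIntegral_mono' (cube_measurable c ℓ)
            (fun x hx => ENNReal.ofReal_le_ofReal (hpt x hx))
      _ = ENNReal.ofReal ((2 * M) ^ s) * volume {x : Eucl n | ∀ i, |x i - c i| ≤ ℓ / 2} :=
          setLIntegral_const _ _
      _ ≤ ENNReal.ofReal (ℓ ^ n * (2 ^ s * M ^ s)) := by
          rw [cube_volume c hℓ, ← ENNReal.ofReal_mul (by positivity)]
          apply ENNReal.ofReal_le_ofReal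
          rw [Real.mul_rpow (by norm_num) hM0.le]
          apply le_of_eq; ring
  · obtain ⟨K₀, hK₀top, hK₀⟩ := lintegral_rpow_closedBall hn hs hs0
    set K₁ : ℝ := K₀.toReal + 1 with hK₁def
    have hK₁ : 0 < K₁ := by positivity
    have hK₀le : K₀ ≤ ENNReal.ofReal K₁ := by
      rw [← ENNReal.ofReal_toReal hK₀top]
      exact ENNReal.ofReal_le_ofReal (by simp [hK₁def])
    set Kc : ℝ := K₁ * 2 ^ ((n : ℝ) + s) * Real.sqrt n ^ (n : ℝ) with hKcdef
    have hKc : 0 < Kc := by positivity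
    refine ⟨Kc + 2 ^ (-s), by positivity, fun c ℓ hℓ => ?_⟩
    set M := max ‖c‖ (Real.sqrt n * ℓ) with hM
    have hM0 : 0 < M := lt_of_lt_of_le (by positivity) (le_max_right _ _)
    have hMs : 0 < M ^ s := Real.rpow_pos_of_pos hM0 s
    rcases le_or_gt ‖c‖ (Real.sqrt n * ℓ) with hcase | hcase
    · -- near the origin
      have hMeq : M = Real.sqrt n * ℓ := max_eq_right hcase
      have hsub : {x : Eucl n | ∀ i, |x i - c i| ≤ ℓ / 2}
          ⊆ closedBall (0 : Eucl n) (2 * (Real.sqrt n * ℓ)) := by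
        intro x hx
        rw [mem_closedBall_zero_iff]
        have h1 : ‖x - c‖ ≤ Real.sqrt n * (ℓ / 2) := cube_norm_bound c hℓ.le x hx
        have h2 : ‖x‖ - ‖c‖ ≤ ‖x - c‖ := norm_sub_norm_le x c
        linarith
      have havg : ⨍ x in {x : Eucl n | ∀ i, |x i - c i| ≤ ℓ / 2}, ‖x‖ ^ s ∂volume
          ≤ Kc * (Real.sqrt n * ℓ) ^ s := by
        apply avg_le_of_lintegral_le c hℓ (by positivity)
        calc ∫⁻ x in {x : Eucl n | ∀ i, |x i - c i| ≤ ℓ / 2}, ENNReal.ofReal (‖x‖ ^ s)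
            ≤ ∫⁻ x in closedBall (0 : Eucl n) (2 * (Real.sqrt n * ℓ)),
                ENNReal.ofReal (‖x‖ ^ s) := lintegral_mono_set hsub
          _ ≤ K₀ * ENNReal.ofReal ((2 * (Real.sqrt n * ℓ)) ^ ((n : ℝ) + s)) :=
              hK₀ _ (by positivity)
          _ ≤ ENNReal.ofReal K₁ * ENNReal.ofReal ((2 * (Real.sqrt n * ℓ)) ^ ((n : ℝ) + s)) :=
              mul_le_mul_left hK₀le _
          _ = ENNReal.ofReal (K₁ * (2 * (Real.sqrt n * ℓ)) ^ ((n : ℝ) + s)) :=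
              (ENNReal.ofReal_mul hK₁.le).symm
          _ ≤ ENNReal.ofReal (ℓ ^ n * (Kc * (Real.sqrt n * ℓ) ^ s)) := by
              apply ENNReal.ofReal_le_ofReal
              apply le_of_eq
              rw [Real.mul_rpow (by norm_num) (by positivity),
                Real.rpow_add (by positivity : (0:ℝ) < Real.sqrt n * ℓ) (n : ℝ) s,
                Real.mul_rpow hsq0.le hℓ.le, Real.rpow_natCast ℓ n, hKcdef]
              ring
      refine havg.trans ?_
      rw [hMeq]
      have : 0 < (Real.sqrt n * ℓ) ^ s := Real.rpow_pos_of_pos (by positivity) s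
      nlinarith [Real.rpow_pos_of_pos two_pos (-s)]
    · -- far from the origin
      have hMeq : M = ‖c‖ := max_eq_left hcase.le
      have hc0 : 0 < ‖c‖ := lt_of_lt_of_le (by positivity) hcase.le
      have havg : ⨍ x in {x : Eucl n | ∀ i, |x i - c i| ≤ ℓ / 2}, ‖x‖ ^ s ∂volume
          ≤ 2 ^ (-s) * ‖c‖ ^ s := by
        apply avg_le_of_lintegral_le c hℓ (by positivity)
        have hpt : ∀ x ∈ {x : Eucl n | ∀ i, |x i - c i| ≤ ℓ / 2},
            ‖x‖ ^ s ≤ (‖c‖ / 2) ^ s := by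
          intro x hx
          have h1 : ‖x - c‖ ≤ Real.sqrt n * (ℓ / 2) := cube_norm_bound c hℓ.le x hx
          have h2 : ‖c‖ - ‖x‖ ≤ ‖x - c‖ := by
            rw [norm_sub_rev]; exact norm_sub_norm_le c x
          have h5 : ‖c‖ / 2 ≤ ‖x‖ := by linarith
          exact Real.rpow_le_rpow_of_nonpos (by positivity) h5 hs0.le
        calc ∫⁻ x in {x : Eucl n | ∀ i, |x i - c i| ≤ ℓ / 2}, ENNReal.ofReal (‖x‖ ^ s)
            ≤ ∫⁻ _x in {x : Eucl n | ∀ i, |x i - c i| ≤ ℓ / 2},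
                ENNReal.ofReal ((‖c‖ / 2) ^ s) :=
              setLIntegral_mono' (cube_measurable c ℓ)
                (fun x hx => ENNReal.ofReal_le_ofReal (hpt x hx))
          _ = ENNReal.ofReal ((‖c‖ / 2) ^ s) * volume {x : Eucl n | ∀ i, |x i - c i| ≤ ℓ / 2} :=
              setLIntegral_const _ _
          _ ≤ ENNReal.ofReal (ℓ ^ n * (2 ^ (-s) * ‖c‖ ^ s)) := by
              rw [cube_volume c hℓ, ← ENNReal.ofReal_mul (by positivity)]
              apply ENNReal.ofReal_le_ofReal
              apply le_of_eq
              rw [Real.div_rpow hc0.le (by norm_num), Real.rpow_neg (by norm_num : (0:ℝ) ≤ 2)]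
              field_simp
      refine havg.trans ?_
      rw [hMeq]
      have hcs : 0 < ‖c‖ ^ s := Real.rpow_pos_of_pos hc0 s
      nlinarith

theorem stein_weiss_power_weight_condition
    (n : ℕ) (hn : 1 ≤ n) (α p q a b : ℝ)
    (hα0 : 0 < α) (hαn : α < n)
    (hp : 1 < p) (hpq : p ≤ q)
    (ha : -(n : ℝ) / q < a) (hab : a ≤ b) (hb : b < (n : ℝ) / (p / (p - 1)))
    (hbal : 1 / p - 1 / q = α / n + (a - b) / n) :
    ∃ C : ℝ, ∀ (c : EuclideanSpace ℝ (Fin n)) (ℓ : ℝ), 0 < ℓ →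
      (volume {x : EuclideanSpace ℝ (Fin n) | ∀ i, |x i - c i| ≤ ℓ / 2}).toReal ^
            (α / n + 1 / q - 1 / p) *
          (⨍ x in {x : EuclideanSpace ℝ (Fin n) | ∀ i, |x i - c i| ≤ ℓ / 2},
              ‖x‖ ^ (a * q) ∂volume) ^ (1 / q) *
          (⨍ x in {x : EuclideanSpace ℝ (Fin n) | ∀ i, |x i - c i| ≤ ℓ / 2},
              ‖x‖ ^ (-b * (p / (p - 1))) ∂volume) ^ (1 / (p / (p - 1))) ≤ C := by
  have hq0 : 0 < q := lt_of_lt_of_le (by linarith) hpq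
  have hp1 : 0 < p - 1 := by linarith
  set p' : ℝ := p / (p - 1) with hp'def
  have hp'0 : 0 < p' := by positivity
  have hn0 : (0 : ℝ) < n := by exact_mod_cast hn
  have hs₁ : -(n : ℝ) < a * q := by
    have h := (div_lt_iff₀ hq0).mp ha
    linarith
  have hs₂ : -(n : ℝ) < -b * p' := by
    have h := (lt_div_iff₀ hp'0).mp hb
    linarith
  obtain ⟨K₁, hK₁, hbd₁⟩ := avg_rpow_bound (n := n) hn hs₁
  obtain ⟨K₂, hK₂, hbd₂⟩ := avg_rpow_bound (n := n) hn hs₂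
  refine ⟨K₁ ^ (1 / q) * K₂ ^ (1 / p'), fun c ℓ hℓ => ?_⟩
  have hsq1 : 1 ≤ Real.sqrt n := by
    rw [show (1 : ℝ) = Real.sqrt 1 by simp]
    exact Real.sqrt_le_sqrt (by exact_mod_cast hn)
  set M := max ‖c‖ (Real.sqrt n * ℓ) with hM
  have hM0 : 0 < M := lt_of_lt_of_le (by positivity) (le_max_right _ _)
  have hℓM : ℓ ≤ M := le_trans (le_mul_of_one_le_left hℓ.le hsq1) (le_max_right _ _)
  have hA₁ := hbd₁ c ℓ hℓ
  have hA₂ := hbd₂ c ℓ hℓ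
  have hA₁0 : 0 ≤ ⨍ x in {x : Eucl n | ∀ i, |x i - c i| ≤ ℓ / 2}, ‖x‖ ^ (a * q) ∂volume := by
    rw [setAverage_eq]
    simp only [smul_eq_mul]
    exact mul_nonneg (by positivity)
      (integral_nonneg fun x => Real.rpow_nonneg (norm_nonneg x) _)
  have hA₂0 : 0 ≤ ⨍ x in {x : Eucl n | ∀ i, |x i - c i| ≤ ℓ / 2}, ‖x‖ ^ (-b * p') ∂volume := by
    rw [setAverage_eq]
    simp only [smul_eq_mul]
    exact mul_nonneg (by positivity)
      (integral_nonneg fun x => Real.rpow_nonneg (norm_nonneg x) _)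
  rw [cube_volume c hℓ, ENNReal.toReal_ofReal (by positivity)]
  have he : α / n + 1 / q - 1 / p = (b - a) / n := by
    have h2 : (b - a) / n = -((a - b) / n) := by ring
    linarith
  rw [he]
  have hF : (ℓ ^ n : ℝ) ^ ((b - a) / n) = ℓ ^ (b - a) := by
    rw [← Real.rpow_natCast ℓ n, ← Real.rpow_mul hℓ.le]
    congr 1
    field_simp
  rw [hF]
  have h1 : (⨍ x in {x : Eucl n | ∀ i, |x i - c i| ≤ ℓ / 2}, ‖x‖ ^ (a * q) ∂volume) ^ (1 / q)
      ≤ K₁ ^ (1 / q) * M ^ a := by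
    calc (⨍ x in {x : Eucl n | ∀ i, |x i - c i| ≤ ℓ / 2}, ‖x‖ ^ (a * q) ∂volume) ^ (1 / q)
        ≤ (K₁ * M ^ (a * q)) ^ (1 / q) :=
          Real.rpow_le_rpow hA₁0 hA₁ (by positivity)
      _ = K₁ ^ (1 / q) * M ^ a := by
          rw [Real.mul_rpow hK₁.le (Real.rpow_nonneg hM0.le _), ← Real.rpow_mul hM0.le,
            show a * q * (1 / q) = a by field_simp]
  have h2 : (⨍ x in {x : Eucl n | ∀ i, |x i - c i| ≤ ℓ / 2}, ‖x‖ ^ (-b * p') ∂volume) ^ (1 / p')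
      ≤ K₂ ^ (1 / p') * M ^ (-b) := by
    calc (⨍ x in {x : Eucl n | ∀ i, |x i - c i| ≤ ℓ / 2}, ‖x‖ ^ (-b * p') ∂volume) ^ (1 / p')
        ≤ (K₂ * M ^ (-b * p')) ^ (1 / p') :=
          Real.rpow_le_rpow hA₂0 hA₂ (by positivity)
      _ = K₂ ^ (1 / p') * M ^ (-b) := by
          rw [Real.mul_rpow hK₂.le (Real.rpow_nonneg hM0.le _), ← Real.rpow_mul hM0.le,
            show -b * p' * (1 / p') = -b by field_simp]
  calc ℓ ^ (b - a)
        * (⨍ x in {x : Eucl n | ∀ i, |x i - c i| ≤ ℓ / 2}, ‖x‖ ^ (a * q) ∂volume) ^ (1 / q)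
        * (⨍ x in {x : Eucl n | ∀ i, |x i - c i| ≤ ℓ / 2}, ‖x‖ ^ (-b * p') ∂volume) ^ (1 / p')
      ≤ ℓ ^ (b - a) * (K₁ ^ (1 / q) * M ^ a) * (K₂ ^ (1 / p') * M ^ (-b)) := by
        apply mul_le_mul
          (mul_le_mul le_rfl h1 (Real.rpow_nonneg hA₁0 _) (by positivity)) h2
          (Real.rpow_nonneg hA₂0 _) (by positivity)
    _ = K₁ ^ (1 / q) * K₂ ^ (1 / p') * ((ℓ / M) ^ (b - a)) := by
        have hMM : M ^ a * M ^ (-b) * M ^ (b - a) = 1 := by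
          rw [← Real.rpow_add hM0, ← Real.rpow_add hM0,
            show a + -b + (b - a) = 0 by ring, Real.rpow_zero]
        rw [Real.div_rpow hℓ.le hM0.le, ← mul_div_assoc,
          eq_div_iff (ne_of_gt (Real.rpow_pos_of_pos hM0 (b - a)))]
        linear_combination K₁ ^ (1 / q) * K₂ ^ (1 / p') * ℓ ^ (b - a) * hMM
    _ ≤ K₁ ^ (1 / q) * K₂ ^ (1 / p') * 1 := by
        apply mul_le_mul_of_nonneg_left _ (by positivity)
        exact Real.rpow_le_one (by positivity)
          ((div_le_one hM0).mpr hℓM) (by linarith)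
    _ = K₁ ^ (1 / q) * K₂ ^ (1 / p') := mul_one _

end
end SteinWeissAux
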